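/- arXiv:2406.13120 — 2 statements merged into one kernel-verified Lean document; each statement's English description precedes it below -/
import Mathlib

section
/- Let P be a nonzero Laurent polynomial with complex coefficients whose distinct nonzero roots are α_1, …, α_k with multiplicities m_1, …, m_k. Then the kernel of the multiplication map V → V, w ↦ P·w, is spanned (as a complex vector space) by the n = m_1 + ⋯ + m_k elements f_{i,j} for j = 1, …, k and i = 0, …, m_j − 1, and these elements are linearly independent. -/
open LaurentPolynomial

noncomputable def laurentMul (P : LaurentPolynomial ℂ) : (ℤ → ℂ) →ₗ[ℂ] (ℤ → ℂ) where
  toFun w m := ∑ j ∈ P.coeff.support, P.coeff j * w (m - j)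
  map_add' u v := by
    funext m
    simp [mul_add, Finset.sum_add_distrib]
  map_smul' c w := by
    funext m
    simp only [Pi.smul_apply, smul_eq_mul, RingHom.id_apply, Finset.mul_sum]
    exact Finset.sum_congr rfl fun j _ => by ring

lemma laurentMul_apply (P : LaurentPolynomial ℂ) (w : ℤ → ℂ) (m : ℤ) :
    laurentMul P w m = P.coeff.sum fun j a => a * w (m - j) := rfl

lemma laurentMul_single (a : ℤ) (c : ℂ) (w : ℤ → ℂ) (m : ℤ) :
    laurentMul (AddMonoidAlgebra.single a c) w m = c * w (m - a) := by
  rw [laurentMul_apply, AddMonoidAlgebra.coeff_single, Finsupp.sum_single_index]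
  simp

lemma laurentMul_add_left (P Q : LaurentPolynomial ℂ) (w : ℤ → ℂ) :
    laurentMul (P + Q) w = laurentMul P w + laurentMul Q w := by
  funext m
  simp only [laurentMul_apply, Pi.add_apply, AddMonoidAlgebra.coeff_add]
  rw [Finsupp.sum_add_index']
  · intro j; simp
  · intro j a b; ring

lemma laurentMul_mul (P Q : LaurentPolynomial ℂ) (w : ℤ → ℂ) :
    laurentMul (P * Q) w = laurentMul P (laurentMul Q w) := by
  induction P using AddMonoidAlgebra.induction_linear with
  | zero => simp only [zero_mul]; funext m; simp [laurentMul_apply, Finsupp.sum_zero_index]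
  | add f g hf hg =>
      rw [add_mul, laurentMul_add_left, laurentMul_add_left, hf, hg]
  | single a b =>
      induction Q using AddMonoidAlgebra.induction_linear with
      | zero => funext m; simp [mul_zero, laurentMul_apply, Finsupp.sum_zero_index, map_zero]
      | add f g hf hg =>
          rw [mul_add, laurentMul_add_left, hf, hg, laurentMul_add_left, map_add]
      | single a' b' =>
          rw [AddMonoidAlgebra.single_mul_single]
          funext m
          simp only [laurentMul_single]
          rw [sub_sub]; ring

lemma laurentMul_toLaurent (R : Polynomial ℂ) (w : ℤ → ℂ) (m : ℤ) :
    laurentMul (Polynomial.toLaurent R) w m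
      = ∑ t ∈ R.support, R.coeff t * w (m - t) := by
  have h : Polynomial.toLaurent R = AddMonoidAlgebra.ofCoeff (Finsupp.mapDomain (Nat.cast : ℕ → ℤ) R.toFinsupp.coeff) := rfl
  rw [laurentMul_apply, h, AddMonoidAlgebra.coeff_ofCoeff, Finsupp.sum_mapDomain_index]
  · rfl
  · intro j; simp
  · intro j a b; ring

noncomputable def fSeries (i : ℕ) (α : ℂ) : ℤ → ℂ :=
  fun l => (∏ t ∈ Finset.range i, ((l : ℂ) - t)) * α ^ (-l)

/-- shift commutes with laurentMul -/
lemma laurentMul_shift (P : LaurentPolynomial ℂ) (w : ℤ → ℂ) :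
    laurentMul P (fun l => w (l - 1)) = fun l => laurentMul P w (l - 1) := by
  funext m
  simp only [laurentMul_apply, Finsupp.sum]
  refine Finset.sum_congr rfl fun j _ => ?_
  rw [sub_right_comm]

lemma laurentMul_XsubC (a : ℂ) (w : ℤ → ℂ) (m : ℤ) :
    laurentMul (Polynomial.toLaurent (Polynomial.X - Polynomial.C a)) w m
      = w (m - 1) - a * w m := by
  have h : Polynomial.toLaurent (Polynomial.X - Polynomial.C a)
      = AddMonoidAlgebra.single (1:ℤ) 1 + AddMonoidAlgebra.single (0:ℤ) (-a) := by
    rw [map_sub, Polynomial.toLaurent_X, Polynomial.toLaurent_C, ← single_eq_C, T,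
      sub_eq_add_neg, ← AddMonoidAlgebra.single_neg]
  rw [h, laurentMul_add_left]
  simp only [Pi.add_apply, laurentMul_single]
  rw [sub_zero]
  ring

lemma fSeries_rec (i : ℕ) (α : ℂ) (hα : α ≠ 0) :
    laurentMul (Polynomial.toLaurent (Polynomial.X - Polynomial.C α)) (fSeries (i+1) α)
      = fun l => (-(i+1) : ℂ) * fSeries i α (l - 1) := by
  funext m
  rw [laurentMul_XsubC]
  simp only [fSeries]
  have e1 : ∀ x : ℂ, ∏ t ∈ Finset.range (i+1), (x - t) = (∏ t ∈ Finset.range i, (x - t)) * (x - i) := by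
    intro x; rw [Finset.prod_range_succ]
  have e2 : ∀ x : ℂ, ∏ t ∈ Finset.range (i+1), (x - t) = x * ∏ t ∈ Finset.range i, ((x - 1) - t) := by
    intro x
    rw [Finset.prod_range_succ']
    simp only [Nat.cast_add, Nat.cast_one, Nat.cast_zero, sub_zero]
    rw [mul_comm]
    congr 1
    exact Finset.prod_congr rfl fun t _ => by ring
  have hm1 : ((m - 1 : ℤ) : ℂ) = (m : ℂ) - 1 := by push_cast; ring
  rw [e1 ((m-1:ℤ):ℂ), e2 (m:ℂ)]
  have hpow : α ^ (-(m-1)) = α * α ^ (-m) := by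
    rw [neg_sub, sub_eq_add_neg, zpow_add₀ hα, zpow_one]
  rw [hpow, hm1]
  ring

/-- kill lemma base -/
lemma fSeries_zero_ker (α : ℂ) (hα : α ≠ 0) :
    laurentMul (Polynomial.toLaurent (Polynomial.X - Polynomial.C α)) (fSeries 0 α) = 0 := by
  funext m
  rw [laurentMul_XsubC]
  simp only [fSeries, Finset.range_zero, Finset.prod_empty, one_mul]
  have : α ^ (-(m-1)) = α * α ^ (-m) := by
    rw [neg_sub, sub_eq_add_neg, zpow_add₀ hα, zpow_one]
  rw [this]
  simp

lemma fSeries_pow_ker (i : ℕ) (α : ℂ) (hα : α ≠ 0) :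
    laurentMul (Polynomial.toLaurent ((Polynomial.X - Polynomial.C α) ^ (i+1))) (fSeries i α) = 0 := by
  induction i with
  | zero => simpa using fSeries_zero_ker α hα
  | succ i ih =>
      rw [pow_succ, map_mul, laurentMul_mul, fSeries_rec i α hα]
      have : (fun l => (-(i+1) : ℂ) * fSeries i α (l - 1))
          = (-(i+1):ℂ) • (fun l => fSeries i α (l - 1)) := by funext l; simp
      rw [this, map_smul]
      rw [laurentMul_shift]
      have h2 : (fun l => laurentMul (Polynomial.toLaurent ((Polynomial.X - Polynomial.C α) ^ (i+1))) (fSeries i α) (l - 1)) = 0 := by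
        funext l; rw [ih]; rfl
      rw [h2]
      simp

lemma fSeries_ker_of_dvd (i : ℕ) (α : ℂ) (hα : α ≠ 0) (R : Polynomial ℂ)
    (h : (Polynomial.X - Polynomial.C α) ^ (i+1) ∣ R) :
    laurentMul (Polynomial.toLaurent R) (fSeries i α) = 0 := by
  obtain ⟨S, rfl⟩ := h
  rw [mul_comm, map_mul, laurentMul_mul, fSeries_pow_ker i α hα, map_zero]

noncomputable def qPoly (i : ℕ) : Polynomial ℂ :=
  ∏ t ∈ Finset.range i, (Polynomial.X - Polynomial.C (t : ℂ))

lemma qPoly_monic (i : ℕ) : (qPoly i).Monic :=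
  Polynomial.monic_prod_of_monic _ _ fun t _ => Polynomial.monic_X_sub_C _

lemma qPoly_natDegree (i : ℕ) : (qPoly i).natDegree = i := by
  rw [qPoly, Polynomial.natDegree_prod]
  · simp only [Polynomial.natDegree_X_sub_C, Finset.sum_const, Finset.card_range, smul_eq_mul,
      mul_one]
  · intro t _; exact Polynomial.X_sub_C_ne_zero _

lemma qPoly_eval (i : ℕ) (x : ℂ) :
    (qPoly i).eval x = ∏ t ∈ Finset.range i, (x - t) := by
  rw [qPoly, Polynomial.eval_prod]
  simp

noncomputable def pPoly (R : Polynomial ℂ) (α : ℂ) (i : ℕ) : Polynomial ℂ :=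
  ∑ t ∈ R.support, Polynomial.C (R.coeff t * α ^ t)
    * (qPoly i).comp (Polynomial.X - Polynomial.C (t : ℂ))

lemma comp_natDegree (i : ℕ) (a : ℂ) :
    ((qPoly i).comp (Polynomial.X - Polynomial.C a)).natDegree = i := by
  rw [Polynomial.natDegree_comp, qPoly_natDegree, Polynomial.natDegree_X_sub_C, mul_one]

lemma comp_monic (i : ℕ) (a : ℂ) :
    ((qPoly i).comp (Polynomial.X - Polynomial.C a)).Monic := by
  apply (qPoly_monic i).comp (Polynomial.monic_X_sub_C a)
  rw [Polynomial.natDegree_X_sub_C]; exact one_ne_zero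

lemma pPoly_natDegree_le (R : Polynomial ℂ) (α : ℂ) (i : ℕ) :
    (pPoly R α i).natDegree ≤ i := by
  refine Polynomial.natDegree_sum_le_of_forall_le _ _ fun t _ => ?_
  calc (Polynomial.C (R.coeff t * α ^ t)
        * (qPoly i).comp (Polynomial.X - Polynomial.C (t : ℂ))).natDegree
      ≤ _ := Polynomial.natDegree_C_mul_le _ _
    _ = i := comp_natDegree i _

lemma pPoly_coeff_top (R : Polynomial ℂ) (α : ℂ) (i : ℕ) :
    (pPoly R α i).coeff i = R.eval α := by
  rw [pPoly, Polynomial.finset_sum_coeff]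
  have : ∀ t ∈ R.support, (Polynomial.C (R.coeff t * α ^ t)
      * (qPoly i).comp (Polynomial.X - Polynomial.C (t : ℂ))).coeff i
        = R.coeff t * α ^ t := by
    intro t _
    rw [Polynomial.coeff_C_mul]
    have h1 : ((qPoly i).comp (Polynomial.X - Polynomial.C (t : ℂ))).coeff i = 1 := by
      have := (comp_monic i (t : ℂ)).coeff_natDegree
      rwa [comp_natDegree] at this
    rw [h1, mul_one]
  rw [Finset.sum_congr rfl this, Polynomial.eval_eq_sum, Polynomial.sum_def]

lemma pPoly_eval (R : Polynomial ℂ) (α : ℂ) (i : ℕ) (x : ℂ) :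
    (pPoly R α i).eval x
      = ∑ t ∈ R.support, R.coeff t * α ^ t * ∏ s ∈ Finset.range i, (x - t - s) := by
  rw [pPoly, Polynomial.eval_finset_sum]
  refine Finset.sum_congr rfl fun t _ => ?_
  rw [Polynomial.eval_mul, Polynomial.eval_C, Polynomial.eval_comp, Polynomial.eval_sub,
    Polynomial.eval_X, Polynomial.eval_C, qPoly_eval]

lemma laurentMul_fSeries (R : Polynomial ℂ) (α : ℂ) (hα : α ≠ 0) (i : ℕ) (m : ℤ) :
    laurentMul (Polynomial.toLaurent R) (fSeries i α) m
      = (pPoly R α i).eval (m : ℂ) * α ^ (-m) := by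
  rw [laurentMul_toLaurent, pPoly_eval, Finset.sum_mul]
  refine Finset.sum_congr rfl fun t _ => ?_
  rw [fSeries]
  have h1 : α ^ (-(m - (t:ℤ))) = α ^ t * α ^ (-m) := by
    rw [neg_sub, sub_eq_add_neg, zpow_add₀ hα, zpow_natCast]
  rw [h1]
  have h2 : ∀ s ∈ Finset.range i, (((m - (t:ℤ) : ℤ)) : ℂ) - (s:ℂ) = (m:ℂ) - t - s := by
    intro s _; push_cast; ring
  rw [Finset.prod_congr rfl h2]
  ring

lemma laurentMul_toLaurent_range (R : Polynomial ℂ) (w : ℤ → ℂ) (m : ℤ) :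
    laurentMul (Polynomial.toLaurent R) w m
      = ∑ t ∈ Finset.range (R.natDegree + 1), R.coeff t * w (m - t) := by
  rw [laurentMul_toLaurent]
  refine Finset.sum_subset (Polynomial.supp_subset_range_natDegree_succ) fun t _ ht => ?_
  rw [Polynomial.notMem_support_iff.mp ht, zero_mul]

lemma ker_zero_of_init (Q : Polynomial ℂ) (hmo : Q.Monic) (h0 : Q.coeff 0 ≠ 0)
    (w : ℤ → ℂ) (hw : laurentMul (Polynomial.toLaurent Q) w = 0)
    (hinit : ∀ i : ℤ, 0 ≤ i → i < Q.natDegree → w i = 0) : w = 0 := by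
  set n := Q.natDegree with hn
  have hrel : ∀ m : ℤ, ∑ t ∈ Finset.range (n + 1), Q.coeff t * w (m - t) = 0 := by
    intro m
    rw [← laurentMul_toLaurent_range, hw]; rfl
  by_cases hn0 : n = 0
  · funext m
    have := hrel m
    rw [hn0] at this
    simp only [zero_add, Finset.range_one, Finset.sum_singleton, Nat.cast_zero, sub_zero] at this
    rcases mul_eq_zero.mp this with h | h
    · exact absurd h h0
    · exact h
  have A : ∀ l : ℤ, ∀ i : ℤ, l ≤ i → i < l + n → w i = 0 := by
    intro l
    induction l using Int.induction_on with
    | zero => intro i h1 h2; exact hinit i h1 (by omega)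
    | succ l ih =>
        intro i h1 h2
        rcases lt_or_ge i ((l:ℤ) + n) with h | h
        · exact ih i (by omega) h
        · have hi : i = (l:ℤ) + n := by omega
          have := hrel ((l:ℤ) + n)
          rw [Finset.sum_range_succ'] at this
          have tail : ∀ t ∈ Finset.range n, Q.coeff (t+1) * w ((l:ℤ) + n - ((t+1:ℕ):ℤ)) = 0 := by
            intro t ht
            rw [Finset.mem_range] at ht
            have : w ((l:ℤ) + n - (t+1)) = 0 := by
              apply ih
              · push_cast; omega
              · push_cast; omega
            push_cast
            rw [this, mul_zero]
          rw [Finset.sum_congr rfl tail, Finset.sum_const_zero, zero_add] at this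
          simp only [Nat.cast_zero, sub_zero] at this
          rcases mul_eq_zero.mp this with h' | h'
          · exact absurd h' h0
          · rwa [hi]
    | pred l ih =>
        intro i h1 h2
        rcases lt_or_ge i (-(l:ℤ)) with h | h
        swap
        · exact ih i h (by omega)
        · have hi : i = -(l:ℤ) - 1 := by omega
          have := hrel (-(l:ℤ) - 1 + n)
          rw [Finset.sum_range_succ] at this
          have tail : ∀ t ∈ Finset.range n, Q.coeff t * w (-(l:ℤ) - 1 + n - t) = 0 := by
            intro t ht
            rw [Finset.mem_range] at ht
            have : w (-(l:ℤ) - 1 + n - t) = 0 := by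
              apply ih
              · push_cast; omega
              · push_cast; omega
            rw [this, mul_zero]
          rw [Finset.sum_congr rfl tail, Finset.sum_const_zero, zero_add] at this
          rw [Polynomial.Monic.coeff_natDegree hmo, one_mul] at this
          rw [hi]
          have harg : -(l:ℤ) - 1 + n - n = -(l:ℤ) - 1 := by push_cast; omega
          rwa [harg] at this
  funext m
  exact A m m le_rfl (by omega)

lemma poly_zero_of_int_roots (p : Polynomial ℂ) (h : ∀ l : ℤ, p.eval (l : ℂ) = 0) :
    p = 0 := by
  refine p.eq_zero_of_infinite_isRoot ?_
  have : Set.range ((↑·) : ℤ → ℂ) ⊆ {x | p.IsRoot x} := by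
    rintro _ ⟨l, rfl⟩; exact h l
  exact Set.Infinite.mono this (Set.infinite_range_of_injective Int.cast_injective)

lemma coeffs_zero (M : ℕ) (c : Fin M → ℂ) (p : Fin M → Polynomial ℂ) (r : ℂ) (hr : r ≠ 0)
    (hdeg : ∀ i : Fin M, (p i).natDegree ≤ i)
    (htop : ∀ i : Fin M, (p i).coeff i = r)
    (hsum : ∑ i, Polynomial.C (c i) * p i = 0) : ∀ i, c i = 0 := by
  by_contra hcon
  push_neg at hcon
  obtain ⟨i1, hi1⟩ := hcon
  classical
  have hSne : (Finset.univ.filter (fun i => c i ≠ 0)).Nonempty := ⟨i1, by simp [hi1]⟩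
  set i0 := (Finset.univ.filter (fun i => c i ≠ 0)).max' hSne with hi0
  have hci0 : c i0 ≠ 0 := by
    have h := Finset.max'_mem _ hSne
    rw [Finset.mem_filter] at h
    exact h.2
  have hco : (∑ i, Polynomial.C (c i) * p i).coeff i0 = c i0 * r := by
    rw [Polynomial.finset_sum_coeff]
    rw [Finset.sum_eq_single_of_mem i0 (Finset.mem_univ _)]
    · rw [Polynomial.coeff_C_mul, htop]
    · intro i _ hne
      rcases lt_or_gt_of_ne hne with hlt | hgt
      · rw [Polynomial.coeff_C_mul, Polynomial.coeff_eq_zero_of_natDegree_lt, mul_zero]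
        exact lt_of_le_of_lt (hdeg i) (by exact_mod_cast hlt)
      · have hnm : i ∉ Finset.univ.filter (fun i => c i ≠ 0) :=
          fun hiS => absurd (Finset.le_max' _ i hiS) (not_le.mpr hgt)
        rw [Finset.mem_filter] at hnm
        push_neg at hnm
        rw [hnm (Finset.mem_univ _), map_zero, zero_mul, Polynomial.coeff_zero]
  rw [hsum, Polynomial.coeff_zero] at hco
  exact hci0 (by
    rcases mul_eq_zero.mp hco.symm with h | h
    · exact h
    · exact absurd h hr)

set_option maxHeartbeats 1000000 in
/-- if the nonzero Laurent polynomial `P` has distinct nonzero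
roots `α_1, …, α_k` with multiplicities `m_1, …, m_k` (i.e. `P = z^d · c · ∏_j
(z - α_j)^{m_j}` with `c ≠ 0`), then the elements `f_{i,j}` (for `j = 1,…,k`,
`i = 0,…,m_j - 1`) are linearly independent and span the kernel of
multiplication by `P` on the space of doubly infinite formal series. -/
theorem ker_laurentMul_spanned_by_fSeries (P : LaurentPolynomial ℂ) (hP : P ≠ 0)
    (k : ℕ) (α : Fin k → ℂ) (m : Fin k → ℕ) (c : ℂ) (d : ℤ)
    (hc : c ≠ 0) (hα0 : ∀ j, α j ≠ 0) (hαinj : Function.Injective α)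
    (hm : ∀ j, 0 < m j)
    (hPfac : P = T d * Polynomial.toLaurent
      (Polynomial.C c * ∏ j, (Polynomial.X - Polynomial.C (α j)) ^ m j)) :
    LinearIndependent ℂ (fun p : Σ j : Fin k, Fin (m j) => fSeries p.2.val (α p.1)) ∧
    Submodule.span ℂ
        (Set.range (fun p : Σ j : Fin k, Fin (m j) => fSeries p.2.val (α p.1)))
      = LinearMap.ker (laurentMul P) := by
  classical
  set v : (Σ j : Fin k, Fin (m j)) → (ℤ → ℂ) :=
    fun p => fSeries p.2.val (α p.1) with hv
  set Q : Polynomial ℂ := ∏ j, (Polynomial.X - Polynomial.C (α j)) ^ m j with hQ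
  have hQmonic : Q.Monic :=
    Polynomial.monic_prod_of_monic _ _ fun j _ => (Polynomial.monic_X_sub_C _).pow _
  have hQdeg : Q.natDegree = ∑ j, m j := by
    rw [hQ, Polynomial.natDegree_prod]
    · refine Finset.sum_congr rfl fun j _ => ?_
      rw [Polynomial.natDegree_pow, Polynomial.natDegree_X_sub_C, mul_one]
    · intro j _
      exact pow_ne_zero _ (Polynomial.X_sub_C_ne_zero _)
  have hQ0 : Q.coeff 0 ≠ 0 := by
    rw [Polynomial.coeff_zero_eq_eval_zero, hQ, Polynomial.eval_prod]
    refine Finset.prod_ne_zero_iff.mpr fun j _ => ?_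
    rw [Polynomial.eval_pow, Polynomial.eval_sub, Polynomial.eval_X, Polynomial.eval_C]
    exact pow_ne_zero _ (by simpa using neg_ne_zero.mpr (hα0 j))
  -- relation between laurentMul P and laurentMul Q
  have hPapp : ∀ w : ℤ → ℂ, ∀ x : ℤ,
      laurentMul P w x = c * laurentMul (Polynomial.toLaurent Q) w (x - d) := by
    intro w x
    rw [hPfac, map_mul, Polynomial.toLaurent_C, laurentMul_mul, laurentMul_mul]
    rw [show (T d : LaurentPolynomial ℂ) = AddMonoidAlgebra.single d 1 from rfl, laurentMul_single,
      one_mul]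
    rw [show (LaurentPolynomial.C c : LaurentPolynomial ℂ) = AddMonoidAlgebra.single 0 c from rfl,
      laurentMul_single, sub_zero]
  have hker : LinearMap.ker (laurentMul P)
      = LinearMap.ker (laurentMul (Polynomial.toLaurent Q)) := by
    ext w
    simp only [LinearMap.mem_ker]
    constructor
    · intro h
      funext x
      have := congrFun h (x + d)
      rw [hPapp, add_sub_cancel_right] at this
      simpa [hc] using this
    · intro h
      funext x
      rw [hPapp, h]
      simp
  -- each fSeries is in the kernel
  have hmem : ∀ p : Σ j : Fin k, Fin (m j), v p ∈ LinearMap.ker (laurentMul P) := by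
    intro p
    rw [hker, LinearMap.mem_ker, hv]
    refine fSeries_ker_of_dvd _ _ (hα0 p.1) _ ?_
    have h1 : (Polynomial.X - Polynomial.C (α p.1)) ^ (p.2.val + 1)
        ∣ (Polynomial.X - Polynomial.C (α p.1)) ^ (m p.1) :=
      pow_dvd_pow _ p.2.isLt
    exact dvd_trans h1 (Finset.dvd_prod_of_mem _ (Finset.mem_univ p.1))
  -- linear independence
  have hLI : LinearIndependent ℂ v := by
    rw [Fintype.linearIndependent_iff]
    intro g hg
    suffices h : ∀ j : Fin k, ∀ i : Fin (m j), g ⟨j, i⟩ = 0 by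
      rintro ⟨j, i⟩; exact h j i
    intro j
    set R : Polynomial ℂ :=
      ∏ t ∈ Finset.univ.erase j, (Polynomial.X - Polynomial.C (α t)) ^ m t with hR
    have hReval : R.eval (α j) ≠ 0 := by
      rw [hR, Polynomial.eval_prod]
      refine Finset.prod_ne_zero_iff.mpr fun t ht => ?_
      rw [Polynomial.eval_pow, Polynomial.eval_sub, Polynomial.eval_X, Polynomial.eval_C]
      refine pow_ne_zero _ (sub_ne_zero.mpr fun he => ?_)
      exact (Finset.mem_erase.mp ht).1 (hαinj he.symm)
    have happ : laurentMul (Polynomial.toLaurent R) (∑ p, g p • v p) = 0 := by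
      rw [hg, map_zero]
    rw [map_sum] at happ
    have hsplit : (Finset.univ : Finset (Σ j : Fin k, Fin (m j)))
        = Finset.univ.sigma fun _ => Finset.univ := rfl
    rw [hsplit, Finset.sum_sigma] at happ
    have hvanish : ∀ j' ∈ Finset.univ, j' ≠ j →
        (∑ i : Fin (m j'), laurentMul (Polynomial.toLaurent R) (g ⟨j', i⟩ • v ⟨j', i⟩)) = 0 := by
      intro j' _ hj'
      refine Finset.sum_eq_zero fun i _ => ?_
      rw [map_smul]
      have : laurentMul (Polynomial.toLaurent R) (v ⟨j', i⟩) = 0 := by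
        refine fSeries_ker_of_dvd _ _ (hα0 j') _ ?_
        have h1 : (Polynomial.X - Polynomial.C (α j')) ^ (i.val + 1)
            ∣ (Polynomial.X - Polynomial.C (α j')) ^ (m j') :=
          pow_dvd_pow _ i.isLt
        exact dvd_trans h1 (Finset.dvd_prod_of_mem _
          (Finset.mem_erase.mpr ⟨hj', Finset.mem_univ _⟩))
      rw [this, smul_zero]
    rw [Finset.sum_eq_single_of_mem j (Finset.mem_univ _)
      (fun j' hj' hne => hvanish j' hj' hne)] at happ
    -- now happ : ∑ i, laurentMul R (g ⟨j,i⟩ • fSeries i (α j)) = 0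
    have hpoly : (∑ i : Fin (m j), Polynomial.C (g ⟨j, i⟩) * pPoly R (α j) i) = 0 := by
      apply poly_zero_of_int_roots
      intro l
      have := congrFun happ l
      simp only [Finset.sum_apply] at this
      have heach : ∀ i : Fin (m j),
          laurentMul (Polynomial.toLaurent R) (g ⟨j, i⟩ • v ⟨j, i⟩) l
            = g ⟨j, i⟩ * ((pPoly R (α j) i).eval (l : ℂ)) * (α j) ^ (-l) := by
        intro i
        rw [map_smul]
        have : laurentMul (Polynomial.toLaurent R) (v ⟨j, i⟩) l
            = (pPoly R (α j) i).eval (l : ℂ) * (α j) ^ (-l) :=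
          laurentMul_fSeries R (α j) (hα0 j) i.val l
        simp only [Pi.smul_apply, smul_eq_mul, this]
        ring
      rw [Finset.sum_congr rfl (fun i _ => heach i)] at this
      rw [← Finset.sum_mul] at this
      rcases mul_eq_zero.mp this with h | h
      · rw [Polynomial.eval_finset_sum]
        rw [← h]
        refine Finset.sum_congr rfl fun i _ => ?_
        rw [Polynomial.eval_mul, Polynomial.eval_C]
      · exact absurd h (zpow_ne_zero _ (hα0 j))
    exact coeffs_zero (m j) (fun i => g ⟨j, i⟩) (fun i => pPoly R (α j) i)
      (R.eval (α j)) hReval (fun i => pPoly_natDegree_le R (α j) i)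
      (fun i => pPoly_coeff_top R (α j) i) hpoly
  refine ⟨hLI, ?_⟩
  -- span = kernel by dimension count
  set n : ℕ := ∑ j, m j with hn
  set K := LinearMap.ker (laurentMul P) with hK
  have hle : Submodule.span ℂ (Set.range v) ≤ K := by
    rw [Submodule.span_le]
    rintro _ ⟨p, rfl⟩
    exact hmem p
  -- evaluation map on kernel
  set ev : K →ₗ[ℂ] (Fin n → ℂ) :=
    LinearMap.pi (fun i : Fin n =>
      (LinearMap.proj ((i : ℕ) : ℤ)).comp (Submodule.subtype K)) with hev
  have hinj : Function.Injective ev := by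
    rw [injective_iff_map_eq_zero]
    intro w hw
    have hP0 : laurentMul P (w : ℤ → ℂ) = 0 := LinearMap.mem_ker.mp w.2
    have hwk : laurentMul (Polynomial.toLaurent Q) w.1 = 0 := by
      funext x
      have h := congrFun hP0 (x + d)
      rw [hPapp ((w : ℤ → ℂ)) (x + d), add_sub_cancel_right, Pi.zero_apply] at h
      exact (mul_eq_zero.mp h).resolve_left hc
    have hzero : (w : ℤ → ℂ) = 0 := by
      refine ker_zero_of_init Q hQmonic hQ0 _ hwk ?_
      intro i h1 h2
      have hlt : i.toNat < n := by omega
      have := congrFun hw ⟨i.toNat, hlt⟩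
      simp only [hev, LinearMap.pi_apply, LinearMap.comp_apply, LinearMap.proj_apply,
        Submodule.subtype_apply, Pi.zero_apply] at this
      rwa [show ((i.toNat : ℕ) : ℤ) = i by omega] at this
    exact Subtype.ext hzero
  haveI : FiniteDimensional ℂ K := FiniteDimensional.of_injective ev hinj
  have hrank1 : Module.finrank ℂ K ≤ n := by
    have := LinearMap.finrank_le_finrank_of_injective hinj
    rwa [Module.finrank_pi, Fintype.card_fin] at this
  have hrank2 : Module.finrank ℂ (Submodule.span ℂ (Set.range v)) = n := by
    rw [finrank_span_eq_card hLI, Fintype.card_sigma]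
    simp [hn]
  exact Submodule.eq_of_le_of_finrank_le hle (by rw [hrank2]; exact hrank1)
end

section
/- Let 0 < q < 1, let l be an integer, and let P be a nonzero Laurent polynomial with complex coefficients having no roots of absolute value q or q^{−1}. Let T : ℂ[z,z⁻¹] → ℂ be ℂ-linear with T(1) = 1, T(R·ρ(R)) > 0 for every nonzero Laurent polynomial R, and T(P(qz)R(qz)) = T(z^l P(q^{−1}z)R(q^{−1}z)) for every Laurent polynomial R. Then there exist a constant C > 0 and a real number κ with 0 < κ < 1 such that |T(z^N)| ≤ C·κ^{|N|} for every integer N. -/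
open LaurentPolynomial
open scoped ComplexOrder

/-- The antilinear conjugation `ρ` on `ℂ[z,z⁻¹]`, sending `∑ aᵢ zⁱ` to
`∑ conj(aᵢ) z⁻ⁱ`. -/
noncomputable def rho (P : LaurentPolynomial ℂ) : LaurentPolynomial ℂ :=
  AddMonoidAlgebra.ofCoeff (Finsupp.equivMapDomain (Equiv.neg ℤ)
    (Finsupp.mapRange (starRingEnd ℂ) (map_zero _) P.coeff))

/-- The Laurent polynomial `P(sz)` obtained from `P` by substituting `z ↦ sz`. -/
noncomputable def lscale (s : ℂ) (P : LaurentPolynomial ℂ) : LaurentPolynomial ℂ :=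
  ∑ j ∈ P.coeff.support, C (P.coeff j * s ^ j) * T j

/-- Evaluation of a Laurent polynomial at a point `z ∈ ℂ`. -/
noncomputable def leval (P : LaurentPolynomial ℂ) (z : ℂ) : ℂ :=
  ∑ j ∈ P.coeff.support, P.coeff j * z ^ j


noncomputable def Sop : Module.End ℂ (ℤ → ℂ) where
  toFun f := fun k => f (k + 1)
  map_add' f g := rfl
  map_smul' c f := rfl

lemma Sop_pow (n : ℕ) (f : ℤ → ℂ) (k : ℤ) : ((Sop ^ n) f) k = f (k + n) := by
  induction n generalizing f k with
  | zero => simp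
  | succ n ih =>
    rw [pow_succ]
    show ((Sop ^ n) (Sop f)) k = _
    rw [ih]
    show f (k + n + 1) = _
    congr 1; push_cast; ring

lemma op_apply (p : Polynomial ℂ) (f : ℤ → ℂ) (k : ℤ) :
    (Polynomial.aeval Sop p) f k = p.sum (fun j a => a * f (k + j)) := by
  induction p using Polynomial.induction_on' with
  | add p q hp hq =>
    rw [map_add, Polynomial.sum_add_index]
    · show (Polynomial.aeval Sop p) f k + (Polynomial.aeval Sop q) f k = _
      rw [hp, hq]
    · intro _; ring
    · intro _ _ _; ring
  | monomial n a =>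
    rw [Polynomial.aeval_monomial, Polynomial.sum_monomial_index]
    · show (a • ((Sop ^ n) f)) k = _
      rw [Pi.smul_apply, Sop_pow]
      rfl
    · ring

lemma zpow_pos' {r : ℝ} (hr : 0 < r) (k : ℤ) : 0 < r ^ k := zpow_pos hr k

lemma zpow_toNat {r : ℝ} {k : ℤ} (hk : 0 ≤ k) : r ^ k = r ^ k.toNat := by
  rw [← zpow_natCast, Int.toNat_of_nonneg hk]

lemma one_le_zpow_nonpos {r : ℝ} (hr0 : 0 < r) (hr1 : r ≤ 1) {k : ℤ} (hk : k ≤ 0) :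
    1 ≤ r ^ k := by
  have h1 : r ^ k = (r⁻¹) ^ (-k) := by rw [inv_zpow, ← zpow_neg, neg_neg]
  rw [h1]
  exact one_le_zpow₀ (one_le_inv_iff₀.mpr ⟨hr0, hr1⟩) (by omega)

lemma zpow_le_zpow_base {r r' : ℝ} (hr0 : 0 < r) (hrr' : r ≤ r') {k : ℤ} (hk : 0 ≤ k) :
    r ^ k ≤ r' ^ k := by
  rw [zpow_toNat hk, zpow_toNat hk]
  exact pow_le_pow_left₀ hr0.le hrr' _

lemma step_gt (α : ℂ) (hα : 1 < ‖α‖) (h e : ℤ → ℂ) (M C r : ℝ)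
    (hM : ∀ k, ‖h k‖ ≤ M) (hr0 : 0 < r) (hr1 : r < 1)
    (he : ∀ k, e k = h (k + 1) - α * h k)
    (hb : ∀ k : ℤ, ‖e k‖ ≤ C * r ^ k) :
    ∃ C₂ : ℝ, 0 < C₂ ∧ ∀ k : ℤ, ‖h k‖ ≤ C₂ * r ^ k := by
  have hC : 0 ≤ C := by
    have := (norm_nonneg (e 0)).trans (hb 0)
    simpa using this
  have hM0 : 0 ≤ M := (norm_nonneg (h 0)).trans (hM 0)
  have hα0 : α ≠ 0 := by
    intro h0; rw [h0] at hα; norm_num at hα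
  have haposr : 0 < ‖α‖ - r := by linarith
  set a := ‖α‖ with ha
  have ha0 : 0 < a := by linarith
  set D : ℝ := C / (a - r) with hD
  have hD0 : 0 ≤ D := div_nonneg hC haposr.le
  -- key induction
  have key : ∀ n : ℕ, ∀ k : ℤ, ‖h k‖ ≤ (a⁻¹) ^ n * M + D * r ^ k := by
    intro n
    induction n with
    | zero => intro k; have := hM k
              have : ‖h k‖ ≤ M := this
              have h2 : 0 ≤ D * r ^ k := mul_nonneg hD0 (zpow_pos' hr0 k).le
              simpa using by linarith
    | succ n ih =>
      intro k
      have hid : h k = α⁻¹ * (h (k + 1) - e k) := by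
        rw [he k]
        field_simp
        ring
      have habs : ‖h k‖ = a⁻¹ * ‖h (k + 1) - e k‖ := by
        rw [hid, norm_mul, norm_inv]
      have htri : ‖h (k + 1) - e k‖ ≤ ‖h (k+1)‖ + ‖e k‖ :=
        norm_sub_le _ _
      have h1 : ‖h (k+1)‖ ≤ (a⁻¹) ^ n * M + D * r ^ (k+1) := ih (k+1)
      have h2 : ‖e k‖ ≤ C * r ^ k := hb k
      have hrk : (0:ℝ) < r ^ k := zpow_pos' hr0 k
      have hrk1 : r ^ (k+1) = r ^ k * r := by rw [zpow_add₀ hr0.ne', zpow_one]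
      have hDr : D * r + C = D * a := by
        rw [hD, div_mul_eq_mul_div, div_mul_eq_mul_div, div_add' _ _ _ haposr.ne',
          div_left_inj' haposr.ne']
        ring
      rw [habs]
      have hinv : 0 < a⁻¹ := inv_pos.mpr ha0
      calc a⁻¹ * ‖h (k + 1) - e k‖
          ≤ a⁻¹ * ((a⁻¹) ^ n * M + D * r ^ (k+1) + C * r ^ k) := by
            apply mul_le_mul_of_nonneg_left _ hinv.le
            linarith
        _ = (a⁻¹) ^ (n+1) * M + a⁻¹ * (r ^ k * (D * r + C)) := by
            rw [hrk1, pow_succ]; ring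
        _ = (a⁻¹) ^ (n+1) * M + D * r ^ k := by
            rw [hDr]; field_simp
  -- choose K
  have hainv : a⁻¹ < 1 := by rw [inv_lt_one_iff₀]; right; exact hα
  obtain ⟨K, hK⟩ := exists_pow_lt_of_lt_one hr0 hainv
  refine ⟨M + D + 1, by positivity, fun k => ?_⟩
  rcases le_or_gt 0 k with hk | hk
  · have := key (K * k.toNat) k
    have h3 : (a⁻¹) ^ (K * k.toNat) ≤ r ^ k := by
      rw [pow_mul, zpow_toNat hk]
      exact pow_le_pow_left₀ (by positivity) hK.le _
    have hrk : (0:ℝ) < r ^ k := zpow_pos' hr0 k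
    nlinarith [mul_le_mul_of_nonneg_right h3 hM0]
  · have h4 : 1 ≤ r ^ k := one_le_zpow_nonpos hr0 hr1.le hk.le
    have := hM k
    nlinarith

lemma step_lt (α : ℂ) (hα : ‖α‖ < 1) (h e : ℤ → ℂ) (M C r : ℝ)
    (hM : ∀ k, ‖h k‖ ≤ M) (hr0 : 0 < r) (hr1 : r < 1)
    (he : ∀ k, e k = h (k + 1) - α * h k)
    (hb : ∀ k : ℤ, ‖e k‖ ≤ C * r ^ k) :
    ∃ C₂ r₂ : ℝ, 0 < C₂ ∧ 0 < r₂ ∧ r₂ < 1 ∧ ∀ k : ℤ, ‖h k‖ ≤ C₂ * r₂ ^ k := by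
  have hC : 0 ≤ C := by
    have := (norm_nonneg (e 0)).trans (hb 0)
    simpa using this
  have hM0 : 0 ≤ M := (norm_nonneg (h 0)).trans (hM 0)
  set a := ‖α‖ with ha
  have ha0 : 0 ≤ a := norm_nonneg α
  set r' : ℝ := max r ((a + 1) / 2) with hr'
  have hrr' : r ≤ r' := le_max_left _ _
  have har' : a < r' := lt_of_lt_of_le (by linarith) (le_max_right _ _)
  have hr'0 : 0 < r' := lt_of_lt_of_le hr0 hrr'
  have hr'1 : r' < 1 := by
    apply max_lt hr1; linarith
  set C' : ℝ := max C (2 * M) with hC'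
  have hC'0 : 0 ≤ C' := le_trans hC (le_max_left _ _)
  -- new bound on e valid for all k with base r'
  have hb' : ∀ k : ℤ, ‖e k‖ ≤ C' * r' ^ k := by
    intro k
    rcases le_or_gt 0 k with hk | hk
    · calc ‖e k‖ ≤ C * r ^ k := hb k
        _ ≤ C' * r' ^ k := by
          apply mul_le_mul (le_max_left _ _) (zpow_le_zpow_base hr0 hrr' hk)
            (zpow_pos' hr0 k).le hC'0
    · have h1 : ‖e k‖ ≤ 2 * M := by
        rw [he k]
        calc ‖h (k+1) - α * h k‖
            ≤ ‖h (k+1)‖ + ‖α * h k‖ := norm_sub_le _ _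
          _ ≤ M + 1 * M := by
              rw [norm_mul]
              have := hM (k+1); have h2 := hM k
              have h3 : ‖α‖ * ‖h k‖ ≤ 1 * M := by
                apply mul_le_mul hα.le h2 (norm_nonneg _) zero_le_one
              linarith
          _ = 2 * M := by ring
      have h4 : 1 ≤ r' ^ k := one_le_zpow_nonpos hr'0 hr'1.le hk.le
      calc ‖e k‖ ≤ 2 * M := h1
        _ = 2 * M * 1 := by ring
        _ ≤ C' * r' ^ k :=
          mul_le_mul (le_max_right _ _) h4 zero_le_one hC'0
  set D : ℝ := C' / (r' - a) with hD
  have hD0 : 0 ≤ D := div_nonneg hC'0 (by linarith)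
  have key : ∀ n : ℕ, ∀ k : ℤ, ‖h k‖ ≤ a ^ n * M + D * r' ^ k := by
    intro n
    induction n with
    | zero =>
      intro k
      have h2 : 0 ≤ D * r' ^ k := mul_nonneg hD0 (zpow_pos' hr'0 k).le
      have := hM k
      simpa using by linarith
    | succ n ih =>
      intro k
      have hid : h k = α * h (k - 1) + e (k - 1) := by
        rw [he (k-1)]
        simp
      have htri : ‖h k‖ ≤ a * ‖h (k-1)‖ + ‖e (k-1)‖ := by
        rw [hid]
        calc ‖α * h (k-1) + e (k-1)‖
            ≤ ‖α * h (k-1)‖ + ‖e (k-1)‖ := norm_add_le _ _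
          _ = a * ‖h (k-1)‖ + ‖e (k-1)‖ := by rw [norm_mul]
      have h1 := ih (k-1)
      have h2 := hb' (k-1)
      have hrk : r' ^ k = r' ^ (k-1) * r' := by
        rw [← zpow_add_one₀ hr'0.ne']; ring_nf
      have hne : r' - a ≠ 0 := ne_of_gt (by linarith)
      have hDr : a * D + C' = D * r' := by
        rw [hD]
        field_simp
        ring
      have hrpos : (0:ℝ) < r' ^ (k-1) := zpow_pos' hr'0 _
      calc ‖h k‖ ≤ a * ‖h (k-1)‖ + ‖e (k-1)‖ := htri
        _ ≤ a * (a ^ n * M + D * r' ^ (k-1)) + C' * r' ^ (k-1) := by nlinarith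
        _ = a ^ (n+1) * M + (a * D + C') * r' ^ (k-1) := by rw [pow_succ]; ring
        _ = a ^ (n+1) * M + D * r' ^ k := by rw [hDr, hrk]; ring
  obtain ⟨K, hK⟩ := exists_pow_lt_of_lt_one hr'0 hα
  refine ⟨M + D + 1, r', by positivity, hr'0, hr'1, fun k => ?_⟩
  rcases le_or_gt 0 k with hk | hk
  · have := key (K * k.toNat) k
    have h3 : a ^ (K * k.toNat) ≤ r' ^ k := by
      rw [pow_mul, zpow_toNat hk]
      exact pow_le_pow_left₀ (by positivity) hK.le _
    have hrk : (0:ℝ) < r' ^ k := zpow_pos' hr'0 k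
    nlinarith [mul_le_mul_of_nonneg_right h3 hM0]
  · have h4 : 1 ≤ r' ^ k := one_le_zpow_nonpos hr'0 hr'1.le hk.le
    have := hM k
    nlinarith

lemma op_bound (p : Polynomial ℂ) (f : ℤ → ℂ) (M : ℝ) (hM : ∀ k, ‖f k‖ ≤ M)
    (k : ℤ) :
    ‖(Polynomial.aeval Sop p) f k‖
      ≤ (∑ j ∈ p.support, ‖p.coeff j‖) * M := by
  rw [op_apply, Polynomial.sum]
  calc ‖∑ j ∈ p.support, p.coeff j * f (k + j)‖
      ≤ ∑ j ∈ p.support, ‖p.coeff j * f (k + j)‖ :=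
        norm_sum_le _ _
    _ ≤ ∑ j ∈ p.support, ‖p.coeff j‖ * M := by
        apply Finset.sum_le_sum
        intro j _
        rw [norm_mul]
        exact mul_le_mul_of_nonneg_left (hM _) (norm_nonneg _)
    _ = (∑ j ∈ p.support, ‖p.coeff j‖) * M := by rw [Finset.sum_mul]

lemma op_linfactor (α : ℂ) (f : ℤ → ℂ) (k : ℤ) :
    (Polynomial.aeval Sop (Polynomial.X - Polynomial.C α)) f k = f (k + 1) - α * f k := by
  rw [map_sub, Polynomial.aeval_X, Polynomial.aeval_C]
  rfl

lemma decay_base (c : ℂ) (hc : c ≠ 0) (f : ℤ → ℂ)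
    (C r : ℝ) (hC : 0 < C) (hr0 : 0 < r) (hr1 : r < 1)
    (hb : ∀ k : ℤ, ‖(Polynomial.aeval Sop (Polynomial.C c)) f k‖ ≤ C * r ^ k) :
    ∃ C' r' : ℝ, 0 < C' ∧ 0 < r' ∧ r' < 1 ∧ ∀ k : ℤ, ‖f k‖ ≤ C' * r' ^ k := by
  refine ⟨C / ‖c‖, r, div_pos hC (norm_pos_iff.mpr hc), hr0, hr1, fun k => ?_⟩
  have h1 := hb k
  have h2 : (Polynomial.aeval Sop (Polynomial.C c)) f k = c * f k := by
    rw [Polynomial.aeval_C]; rfl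
  rw [h2, norm_mul] at h1
  have hc0 : 0 < ‖c‖ := norm_pos_iff.mpr hc
  rw [div_mul_eq_mul_div, le_div_iff₀ hc0]
  linarith

lemma decay_of_op_decay :
    ∀ (n : ℕ) (p : Polynomial ℂ), p.natDegree ≤ n → p ≠ 0 →
    (∀ z : ℂ, ‖z‖ = 1 → Polynomial.eval z p ≠ 0) →
    ∀ (f : ℤ → ℂ) (M : ℝ), (∀ k, ‖f k‖ ≤ M) →
    ∀ (C r : ℝ), 0 < C → 0 < r → r < 1 →
    (∀ k : ℤ, ‖(Polynomial.aeval Sop p) f k‖ ≤ C * r ^ k) →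
    ∃ C' r' : ℝ, 0 < C' ∧ 0 < r' ∧ r' < 1 ∧ ∀ k : ℤ, ‖f k‖ ≤ C' * r' ^ k := by
  intro n
  induction n with
  | zero =>
    intro p hdeg hp hroot f M hM C r hC hr0 hr1 hb
    have h0 : p = Polynomial.C (p.coeff 0) :=
      Polynomial.eq_C_of_natDegree_eq_zero (Nat.le_zero.mp hdeg)
    have hc : p.coeff 0 ≠ 0 := by
      intro h; apply hp; rw [h0, h, map_zero]
    exact decay_base _ hc f C r hC hr0 hr1 (by rw [← h0]; exact hb)
  | succ n ih =>
    intro p hdeg hp hroot f M hM C r hC hr0 hr1 hb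
    rcases Nat.eq_zero_or_pos p.natDegree with h0 | hpos
    · have h0' : p = Polynomial.C (p.coeff 0) := Polynomial.eq_C_of_natDegree_eq_zero h0
      have hc : p.coeff 0 ≠ 0 := by
        intro h; apply hp; rw [h0', h, map_zero]
      exact decay_base _ hc f C r hC hr0 hr1 (by rw [← h0']; exact hb)
    · -- degree ≥ 1 : find a root
      obtain ⟨α, hαroot⟩ := Complex.exists_root (Polynomial.natDegree_pos_iff_degree_pos.mp hpos)
      obtain ⟨p', hfac⟩ := Polynomial.dvd_iff_isRoot.mpr hαroot
      have hX : (Polynomial.X - Polynomial.C α) ≠ 0 := Polynomial.X_sub_C_ne_zero α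
      have hp' : p' ≠ 0 := by
        intro h; apply hp; rw [hfac, h, mul_zero]
      have hdeg' : p'.natDegree ≤ n := by
        have := Polynomial.natDegree_mul hX hp'
        rw [← hfac, Polynomial.natDegree_X_sub_C] at this
        omega
      have hroot' : ∀ z : ℂ, ‖z‖ = 1 → Polynomial.eval z p' ≠ 0 := by
        intro z hz h
        exact hroot z hz (by rw [hfac, Polynomial.eval_mul, h, mul_zero])
      have hα1 : ‖α‖ ≠ 1 := by
        intro h
        exact hroot α h hαroot
      set h : ℤ → ℂ := (Polynomial.aeval Sop p') f with hh
      set M' : ℝ := (∑ j ∈ p'.support, ‖p'.coeff j‖) * M with hM'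
      have hhM : ∀ k, ‖h k‖ ≤ M' := fun k => op_bound p' f M hM k
      have he : ∀ k : ℤ, (Polynomial.aeval Sop p) f k = h (k + 1) - α * h k := by
        intro k
        rw [hfac, map_mul]
        have : (Polynomial.aeval Sop (Polynomial.X - Polynomial.C α) *
            Polynomial.aeval Sop p') f = (Polynomial.aeval Sop (Polynomial.X - Polynomial.C α))
              ((Polynomial.aeval Sop p') f) := rfl
        rw [this, ← hh, op_linfactor]
      rcases lt_or_gt_of_ne hα1 with hlt | hgt
      · obtain ⟨C₂, r₂, hC₂, hr₂0, hr₂1, hhb⟩ :=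
          step_lt α hlt h (fun k => (Polynomial.aeval Sop p) f k) M' C r hhM hr0 hr1
            he hb
        exact ih p' hdeg' hp' hroot' f M hM C₂ r₂ hC₂ hr₂0 hr₂1 hhb
      · obtain ⟨C₂, hC₂, hhb⟩ :=
          step_gt α hgt h (fun k => (Polynomial.aeval Sop p) f k) M' C r hhM hr0 hr1
            he hb
        exact ih p' hdeg' hp' hroot' f M hM C₂ r hC₂ hr0 hr1 hhb

lemma op_monomial (n : ℕ) (a : ℂ) (f : ℤ → ℂ) (k : ℤ) :
    (Polynomial.aeval Sop (Polynomial.monomial n a)) f k = a * f (k + n) := by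
  rw [op_apply, Polynomial.sum_monomial_index]
  ring

lemma poly_aeval_apply (s : Finset ℤ) (c : ℤ → ℂ) (n : ℤ → ℤ) (hn : ∀ j ∈ s, 0 ≤ n j)
    (f : ℤ → ℂ) (k : ℤ) :
    (Polynomial.aeval Sop (∑ j ∈ s, Polynomial.monomial (n j).toNat (c j))) f k
      = ∑ j ∈ s, c j * f (k + n j) := by
  rw [map_sum]
  have h : ((∑ j ∈ s, Polynomial.aeval Sop (Polynomial.monomial (n j).toNat (c j))) f) k
      = ∑ j ∈ s, (Polynomial.aeval Sop (Polynomial.monomial (n j).toNat (c j))) f k := by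
    rw [LinearMap.coe_sum, Finset.sum_apply, Finset.sum_apply]
  rw [h]
  apply Finset.sum_congr rfl
  intro j hj
  rw [op_monomial, Int.toNat_of_nonneg (hn j hj)]

lemma poly_eval (s : Finset ℤ) (c : ℤ → ℂ) (n : ℤ → ℤ) (z : ℂ) :
    Polynomial.eval z (∑ j ∈ s, Polynomial.monomial (n j).toNat (c j))
      = ∑ j ∈ s, c j * z ^ (n j).toNat := by
  rw [Polynomial.eval_finset_sum]
  apply Finset.sum_congr rfl
  intro j _
  rw [Polynomial.eval_monomial]

lemma poly_coeff0 (s : Finset ℤ) (c : ℤ → ℂ) (n : ℤ → ℤ) (j0 : ℤ) (hj0 : j0 ∈ s)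
    (hn0 : n j0 = 0) (hinj : ∀ j ∈ s, j ≠ j0 → n j ≠ 0) (hpos : ∀ j ∈ s, 0 ≤ n j) :
    (∑ j ∈ s, Polynomial.monomial (n j).toNat (c j)).coeff 0 = c j0 := by
  rw [Polynomial.finset_sum_coeff]
  rw [Finset.sum_eq_single j0]
  · rw [Polynomial.coeff_monomial, hn0]
    simp
  · intro j hj hne
    rw [Polynomial.coeff_monomial]
    rw [if_neg]
    intro h
    have := hpos j hj
    exact hinj j hj hne (by omega)
  · intro h; exact absurd hj0 h



lemma rho_apply (P : LaurentPolynomial ℂ) (a : ℤ) :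
    (rho P).coeff a = (starRingEnd ℂ) (P.coeff (-a)) := by
  simp [rho, Finsupp.equivMapDomain_apply, Finsupp.mapRange_apply]

lemma rho_TC (N : ℤ) (t : ℂ) :
    rho (T N + C t) = T (-N) + C ((starRingEnd ℂ) t) := by
  ext a
  rw [AddMonoidAlgebra.coeff_add, Finsupp.add_apply, rho_apply, AddMonoidAlgebra.coeff_add,
    Finsupp.add_apply]
  simp only [T_apply, C_apply]
  rcases eq_or_ne N (-a) with h | h
  · have h2 : -N = a := by omega
    have h3 : (a = 0) ↔ (-a = 0) := by omega
    simp [h, h2]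
    split_ifs with h4 h5 h5 <;> simp_all <;> omega
  · have h2 : ¬(-N = a) := by omega
    have h3 : (a = 0) ↔ (-a = 0) := by omega
    simp [h, h2]
    split_ifs with h4 h5 h5 <;> simp_all <;> omega

lemma tr_single (tr : LaurentPolynomial ℂ →ₗ[ℂ] ℂ) (n : ℤ) (a : ℂ) :
    tr (AddMonoidAlgebra.single n a) = a * tr (T n) := by
  have h : (AddMonoidAlgebra.single n a : LaurentPolynomial ℂ) = a • T n := by
    rw [show (T n : LaurentPolynomial ℂ) = AddMonoidAlgebra.single n 1 from rfl,
      AddMonoidAlgebra.smul_single, smul_eq_mul, mul_one]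
  rw [h, map_smul, smul_eq_mul]

lemma expand_E (tr : LaurentPolynomial ℂ →ₗ[ℂ] ℂ) (h1 : tr 1 = 1) (N : ℤ) (hN : N ≠ 0) (t : ℂ) :
    tr ((T N + C t) * rho (T N + C t))
      = 1 + t * (starRingEnd ℂ) t + (starRingEnd ℂ) t * tr (T N) + t * tr (T (-N)) := by
  rw [rho_TC]
  have hT : ∀ n : ℤ, (T n : LaurentPolynomial ℂ) = AddMonoidAlgebra.single n 1 := fun _ => rfl
  have hC : ∀ c : ℂ, (C c : LaurentPolynomial ℂ) = AddMonoidAlgebra.single 0 c := fun c =>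
    (single_eq_C c).symm
  rw [add_mul, mul_add, mul_add, hT, hT, hC, hC]
  rw [AddMonoidAlgebra.single_mul_single, AddMonoidAlgebra.single_mul_single,
    AddMonoidAlgebra.single_mul_single, AddMonoidAlgebra.single_mul_single]
  rw [map_add, map_add, map_add, tr_single, tr_single, tr_single, tr_single]
  rw [add_neg_cancel]
  have h0 : tr (T 0) = 1 := by rw [T_zero, h1]
  rw [add_zero, zero_add, zero_add] at *
  rw [h0, ← hT N, ← hT (-N)]
  ring

lemma m_bound (tr : LaurentPolynomial ℂ →ₗ[ℂ] ℂ) (h1 : tr 1 = 1)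
    (hpos : ∀ R : LaurentPolynomial ℂ, R ≠ 0 → 0 < tr (R * rho R)) (N : ℤ) :
    ‖tr (T N)‖ ≤ 2 := by
  rcases eq_or_ne N 0 with h | hN
  · rw [h, T_zero, h1]; norm_num
  set u := tr (T N) with hu
  set v := tr (T (-N)) with hv
  have hE : ∀ t : ℂ,
      0 < 1 + t * (starRingEnd ℂ) t + (starRingEnd ℂ) t * u + t * v := by
    intro t
    rw [hu, hv, ← expand_E tr h1 N hN t]
    apply hpos
    intro h0
    have : ((T N + C t : LaurentPolynomial ℂ)).coeff N = 0 := by rw [h0]; rfl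
    rw [AddMonoidAlgebra.coeff_add, Finsupp.add_apply] at this
    simp only [T_apply, C_apply, if_pos rfl, if_neg hN] at this
    norm_num at this
  have key : ∀ t : ℂ,
      0 < (1 + t * (starRingEnd ℂ) t + (starRingEnd ℂ) t * u + t * v).re ∧
      (1 + t * (starRingEnd ℂ) t + (starRingEnd ℂ) t * u + t * v).im = 0 := by
    intro t
    have := hE t
    rw [Complex.lt_def] at this
    exact ⟨by simpa using this.1, by simpa using this.2.symm⟩
  obtain ⟨r1, i1⟩ := key 1
  obtain ⟨r2, i2⟩ := key (-1)
  obtain ⟨r3, i3⟩ := key Complex.I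
  obtain ⟨r4, i4⟩ := key (-Complex.I)
  simp only [map_one, map_neg, Complex.conj_I, Complex.add_re, Complex.add_im,
    Complex.one_re, Complex.one_im, Complex.mul_re, Complex.mul_im, Complex.neg_re,
    Complex.neg_im, Complex.I_re, Complex.I_im, Complex.one_re] at r1 i1 r2 i2 r3 i3 r4 i4
  have habs := Complex.norm_le_abs_re_add_abs_im u
  have h1' : |u.re| ≤ 1 := by rw [abs_le]; constructor <;> nlinarith
  have h2' : |u.im| ≤ 1 := by rw [abs_le]; constructor <;> nlinarith
  linarith



lemma tr_lscale (tr : LaurentPolynomial ℂ →ₗ[ℂ] ℂ) (s : ℂ) (Q : LaurentPolynomial ℂ) :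
    tr (lscale s Q) = ∑ j ∈ Q.coeff.support, Q.coeff j * s ^ j * tr (T j) := by
  rw [lscale, map_sum]
  apply Finset.sum_congr rfl
  intro j _
  rw [← single_eq_C_mul_T, tr_single]

lemma tr_T_mul_lscale (tr : LaurentPolynomial ℂ →ₗ[ℂ] ℂ) (l : ℤ) (s : ℂ)
    (Q : LaurentPolynomial ℂ) :
    tr (T l * lscale s Q) = ∑ j ∈ Q.coeff.support, Q.coeff j * s ^ j * tr (T (l + j)) := by
  rw [lscale, Finset.mul_sum, map_sum]
  apply Finset.sum_congr rfl
  intro j _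
  rw [← single_eq_C_mul_T, show (T l : LaurentPolynomial ℂ) = AddMonoidAlgebra.single l 1 from rfl,
    AddMonoidAlgebra.single_mul_single, one_mul, tr_single]

lemma mul_T_eq (P : LaurentPolynomial ℂ) (k : ℤ) :
    (P * T k).coeff = Finsupp.mapDomain (· + k) P.coeff := by
  ext j
  rw [show (T k : LaurentPolynomial ℂ) = AddMonoidAlgebra.single k 1 from rfl]
  rw [AddMonoidAlgebra.coeff_mul_single_apply, mul_one]
  rw [show ((· + k) : ℤ → ℤ) = (Equiv.addRight k : ℤ → ℤ) from rfl,
    Finsupp.mapDomain_equiv_apply]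
  rfl

lemma sum_mul_T (P : LaurentPolynomial ℂ) (k : ℤ) (G : ℤ → ℂ) :
    ∑ j ∈ (P * T k).coeff.support, (P * T k : LaurentPolynomial ℂ).coeff j * G j = ∑ j ∈ P.coeff.support, P.coeff j * G (j + k) := by
  rw [mul_T_eq]
  have h := Finsupp.sum_mapDomain_index (f := (· + k)) (s := P.coeff)
    (h := fun j a => a * G j) (fun j => by simp) (fun j a b => by ring)
  rw [Finsupp.sum, Finsupp.sum] at h
  exact h

/-- let `0 < q < 1`, `l ∈ ℤ`, and `P` a nonzero Laurent polynomial
with no roots of absolute value `q` or `q⁻¹`. Let `tr : ℂ[z,z⁻¹] → ℂ` be linear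
with `tr 1 = 1`, `tr(R·ρ(R)) > 0` for all nonzero `R`, and
`tr(P(qz)R(qz)) = tr(z^l P(q⁻¹z)R(q⁻¹z))` for all `R`. Then the coefficients
`tr(z^N)` decay exponentially: `|tr(z^N)| ≤ C·κ^{|N|}` for some `C > 0`,
`0 < κ < 1`. -/
theorem trace_coefficients_exponential_decay (q : ℝ) (hq0 : 0 < q) (hq1 : q < 1)
    (l : ℤ) (P : LaurentPolynomial ℂ) (hP : P ≠ 0)
    (hroots : ∀ z : ℂ, leval P z = 0 →
      ‖z‖ ≠ q ∧ ‖z‖ ≠ q⁻¹)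
    (tr : LaurentPolynomial ℂ →ₗ[ℂ] ℂ)
    (h1 : tr 1 = 1)
    (hpos : ∀ R : LaurentPolynomial ℂ, R ≠ 0 → 0 < tr (R * rho R))
    (htr : ∀ R : LaurentPolynomial ℂ,
      tr (lscale (q : ℂ) (P * R)) = tr (T l * lscale ((q : ℂ)⁻¹) (P * R))) :
    ∃ C : ℝ, 0 < C ∧ ∃ κ : ℝ, 0 < κ ∧ κ < 1 ∧
      ∀ N : ℤ, ‖tr (T N)‖ ≤ C * κ ^ N.natAbs := by
  
  classical
  have hqc : (q:ℂ) ≠ 0 := by exact_mod_cast hq0.ne'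
  have hne : P.coeff.support.Nonempty := Finsupp.support_nonempty_iff.mpr
    (fun h => hP (AddMonoidAlgebra.coeff_injective h))
  set m : ℤ → ℂ := fun n => tr (T n) with hm_def
  have hm : ∀ n, ‖m n‖ ≤ 2 := fun n => m_bound tr h1 hpos n
  -- the recurrence
  have hrec : ∀ k : ℤ,
      (q:ℂ) ^ k * (∑ j ∈ P.coeff.support, P.coeff j * ((q:ℂ) ^ j * m (j + k)))
        = ((q:ℂ)⁻¹) ^ k * (∑ j ∈ P.coeff.support, P.coeff j * (((q:ℂ)⁻¹) ^ j * m (l + (j + k)))) := by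
    intro k
    have h := htr (T k)
    rw [tr_lscale, tr_T_mul_lscale] at h
    have e1 : ∑ j ∈ (P * T k).coeff.support, (P * T k : LaurentPolynomial ℂ).coeff j * (q:ℂ) ^ j * tr (T j)
        = ∑ j ∈ P.coeff.support, P.coeff j * ((q:ℂ) ^ (j+k) * m (j + k)) := by
      rw [← sum_mul_T P k (fun j => (q:ℂ) ^ j * m j)]
      apply Finset.sum_congr rfl; intro j _; rw [hm_def]; ring
    have e2 : ∑ j ∈ (P * T k).coeff.support,
          (P * T k : LaurentPolynomial ℂ).coeff j * ((q:ℂ)⁻¹) ^ j * tr (T (l + j))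
        = ∑ j ∈ P.coeff.support, P.coeff j * (((q:ℂ)⁻¹) ^ (j+k) * m (l + (j + k))) := by
      rw [← sum_mul_T P k (fun j => ((q:ℂ)⁻¹) ^ j * m (l + j))]
      apply Finset.sum_congr rfl; intro j _; rw [hm_def]; ring
    rw [e1, e2] at h
    calc (q:ℂ) ^ k * (∑ j ∈ P.coeff.support, P.coeff j * ((q:ℂ) ^ j * m (j + k)))
        = ∑ j ∈ P.coeff.support, P.coeff j * ((q:ℂ) ^ (j+k) * m (j + k)) := by
          rw [Finset.mul_sum]
          apply Finset.sum_congr rfl; intro j _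
          rw [zpow_add₀ hqc]; ring
      _ = ∑ j ∈ P.coeff.support, P.coeff j * (((q:ℂ)⁻¹) ^ (j+k) * m (l + (j + k))) := h
      _ = ((q:ℂ)⁻¹) ^ k * (∑ j ∈ P.coeff.support, P.coeff j * (((q:ℂ)⁻¹) ^ j * m (l + (j + k)))) := by
          rw [Finset.mul_sum]
          apply Finset.sum_congr rfl; intro j _
          rw [zpow_add₀ (inv_ne_zero hqc)]; ring
  -- abs facts
  have habsq : ∀ k : ℤ, ‖(q:ℂ) ^ k‖ = q ^ k := by
    intro k; rw [norm_zpow, Complex.norm_of_nonneg hq0.le]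
  have habsq' : ∀ k : ℤ, ‖((q:ℂ)⁻¹) ^ k‖ = q ^ (-k) := by
    intro k; rw [inv_zpow, ← zpow_neg, habsq]
  have hqz : ∀ k : ℤ, (0:ℝ) < q ^ k := fun k => zpow_pos' hq0 k
  set G : ℤ → ℂ := fun t => ∑ j ∈ P.coeff.support, P.coeff j * ((q:ℂ) ^ j * m (j + t)) with hG_def
  set H : ℤ → ℂ := fun t => ∑ j ∈ P.coeff.support, P.coeff j * (((q:ℂ)⁻¹) ^ j * m (l + (j + t))) with hH_def
  have hrel : ∀ k : ℤ, q ^ k * ‖G k‖ = q ^ (-k) * ‖H k‖ := by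
    intro k
    have h2 := congrArg norm (hrec k)
    rw [norm_mul, norm_mul, habsq, habsq'] at h2
    exact h2
  set A : ℝ := 2 * ∑ j ∈ P.coeff.support, ‖P.coeff j‖ * q ^ j with hA_def
  set B : ℝ := 2 * ∑ j ∈ P.coeff.support, ‖P.coeff j‖ * q ^ (-j) with hB_def
  have hGb : ∀ t, ‖G t‖ ≤ A := by
    intro t
    calc ‖G t‖ ≤ ∑ j ∈ P.coeff.support, ‖P.coeff j * ((q:ℂ) ^ j * m (j + t))‖ :=
          norm_sum_le _ _
      _ ≤ ∑ j ∈ P.coeff.support, ‖P.coeff j‖ * q ^ j * 2 := by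
          apply Finset.sum_le_sum
          intro j _
          rw [norm_mul, norm_mul, habsq, mul_assoc]
          apply mul_le_mul_of_nonneg_left _ (norm_nonneg _)
          have := hm (j + t)
          nlinarith [hqz j, norm_nonneg (m (j + t)), hm (j + t)]
      _ = A := by rw [hA_def, Finset.mul_sum]
                  apply Finset.sum_congr rfl; intro j _; ring
  have hHb : ∀ t, ‖H t‖ ≤ B := by
    intro t
    calc ‖H t‖ ≤ ∑ j ∈ P.coeff.support, ‖P.coeff j * (((q:ℂ)⁻¹) ^ j * m (l + (j + t)))‖ :=
          norm_sum_le _ _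
      _ ≤ ∑ j ∈ P.coeff.support, ‖P.coeff j‖ * q ^ (-j) * 2 := by
          apply Finset.sum_le_sum
          intro j _
          rw [norm_mul, norm_mul, habsq', mul_assoc]
          apply mul_le_mul_of_nonneg_left _ (norm_nonneg _)
          nlinarith [hqz (-j), norm_nonneg (m (l + (j + t))), hm (l + (j + t))]
      _ = B := by rw [hB_def, Finset.mul_sum]
                  apply Finset.sum_congr rfl; intro j _; ring
  have hqq : ∀ t : ℤ, q ^ t * q ^ (-t) = 1 := by
    intro t; rw [← zpow_add₀ hq0.ne', add_neg_cancel, zpow_zero]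
  have hH2 : ∀ t, ‖H t‖ ≤ A * (q ^ t * q ^ t) := by
    intro t
    have h2 := hrel t
    have h3 : ‖H t‖ = q ^ t * (q ^ t * ‖G t‖) := by
      have h5 : q ^ t * (q ^ (-t) * ‖H t‖) = ‖H t‖ := by
        rw [← mul_assoc, hqq t, one_mul]
      rw [← h5, ← h2]
    rw [h3]
    have := hGb t
    nlinarith [hqz t, norm_nonneg (G t)]
  have hG2 : ∀ t, ‖G t‖ ≤ B * (q ^ (-t) * q ^ (-t)) := by
    intro t
    have h2 := hrel t
    have h3 : ‖G t‖ = q ^ (-t) * (q ^ (-t) * ‖H t‖) := by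
      have h5 : q ^ (-t) * (q ^ t * ‖G t‖) = ‖G t‖ := by
        rw [← mul_assoc, mul_comm (q ^ (-t)) (q ^ t), hqq t, one_mul]
      rw [← h5, h2]
    rw [h3]
    have := hHb t
    nlinarith [hqz (-t), norm_nonneg (H t)]
  -- positive side
  set r : ℝ := q * q with hr_def
  have hr0 : 0 < r := by nlinarith
  have hr1 : r < 1 := by nlinarith
  have hrqq : ∀ k : ℤ, r ^ k = q ^ k * q ^ k := fun k => mul_zpow _ _ _
  have hA0 : 0 ≤ A := le_trans (norm_nonneg (G 0)) (hGb 0)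
  have hB0 : 0 ≤ B := le_trans (norm_nonneg (H 0)) (hHb 0)
  set d : ℤ := P.coeff.support.min' hne with hd_def
  have hdmem : d ∈ P.coeff.support := P.coeff.support.min'_mem hne
  have hdle : ∀ j ∈ P.coeff.support, d ≤ j := fun j hj => P.coeff.support.min'_le j hj
  set ppos : Polynomial ℂ :=
    ∑ j ∈ P.coeff.support, Polynomial.monomial (j - d).toNat (P.coeff j * ((q:ℂ)⁻¹) ^ j) with hppos_def
  have hPd : P.coeff d ≠ 0 := Finsupp.mem_support_iff.mp hdmem
  have hppos_ne : ppos ≠ 0 := by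
    intro h0
    have hc := poly_coeff0 P.coeff.support (fun j => P.coeff j * ((q:ℂ)⁻¹) ^ j) (fun j => j - d) d hdmem
      (show d - d = 0 by omega) (fun j hj hne' => show j - d ≠ 0 by have := hdle j hj; omega)
      (fun j hj => show (0:ℤ) ≤ j - d by have := hdle j hj; omega)
    rw [← hppos_def, h0, Polynomial.coeff_zero] at hc
    have hz : ((q:ℂ)⁻¹) ^ d ≠ 0 := zpow_ne_zero d (inv_ne_zero hqc)
    rcases mul_eq_zero.mp hc.symm with h | h
    · exact hPd h
    · exact hz h
  have hppos_root : ∀ z : ℂ, ‖z‖ = 1 → Polynomial.eval z ppos ≠ 0 := by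
    intro z hz h0
    have hz0 : z ≠ 0 := by intro h; rw [h] at hz; simp at hz
    have he2 : Polynomial.eval z ppos = z ^ (-d) * leval P (z * (q:ℂ)⁻¹) := by
      rw [hppos_def, poly_eval, _root_.leval, Finset.mul_sum]
      apply Finset.sum_congr rfl
      intro j hj
      have hj' : (((j - d).toNat : ℤ)) = j - d := Int.toNat_of_nonneg (by have := hdle j hj; omega)
      have hz2 : (z : ℂ) ^ ((j - d).toNat) = z ^ (j : ℤ) * z ^ (-d) := by
        rw [← zpow_natCast, hj', sub_eq_add_neg, zpow_add₀ hz0]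
      rw [hz2, mul_zpow]
      ring
    rw [he2] at h0
    have hzd : z ^ (-d) ≠ 0 := zpow_ne_zero _ hz0
    have hlv : leval P (z * (q:ℂ)⁻¹) = 0 := by
      rcases mul_eq_zero.mp h0 with h | h
      · exact absurd h hzd
      · exact h
    have := (hroots _ hlv).2
    apply this
    rw [norm_mul, hz, one_mul, norm_inv, Complex.norm_of_nonneg hq0.le]
  set fpos : ℤ → ℂ := fun t => m (l + t) with hfpos_def
  have hfb : ∀ k, ‖fpos k‖ ≤ 2 := fun k => hm _
  set Cp : ℝ := A * (q ^ (-d) * q ^ (-d)) + 1 with hCp_def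
  have hCp : 0 < Cp := by positivity
  have hbpos : ∀ k : ℤ, ‖(Polynomial.aeval Sop ppos) fpos k‖ ≤ Cp * r ^ k := by
    intro k
    have e3 : (Polynomial.aeval Sop ppos) fpos k = H (k - d) := by
      rw [hppos_def, poly_aeval_apply P.coeff.support _ (fun j => j - d)
        (fun j hj => show (0:ℤ) ≤ j - d by have := hdle j hj; omega) fpos k, hH_def]
      simp only
      apply Finset.sum_congr rfl
      intro j hj
      rw [hfpos_def]
      simp only
      rw [show l + (j + (k - d)) = l + (k + (j - d)) from by ring]
      ring
    rw [e3]
    have h4 := hH2 (k - d)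
    have h5 : q ^ (k - d) = q ^ k * q ^ (-d) := by
      rw [sub_eq_add_neg, zpow_add₀ hq0.ne']
    have h6 : A * (q ^ (k - d) * q ^ (k - d)) = A * (q ^ (-d) * q ^ (-d)) * r ^ k := by
      rw [h5, hrqq]; ring
    have h7 : (0:ℝ) < r ^ k := zpow_pos' hr0 k
    calc ‖H (k - d)‖ ≤ A * (q ^ (k - d) * q ^ (k - d)) := h4
      _ = A * (q ^ (-d) * q ^ (-d)) * r ^ k := h6
      _ ≤ Cp * r ^ k := by
          apply mul_le_mul_of_nonneg_right _ h7.le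
          rw [hCp_def]; linarith
  obtain ⟨C₁, r₁, hC₁, hr₁0, hr₁1, hdec₁⟩ := decay_of_op_decay ppos.natDegree ppos le_rfl
    hppos_ne hppos_root fpos 2 hfb Cp r hCp hr0 hr1 hbpos
  -- negative side
  set em : ℤ := P.coeff.support.max' hne with hem_def
  have hemmem : em ∈ P.coeff.support := P.coeff.support.max'_mem hne
  have hemle : ∀ j ∈ P.coeff.support, j ≤ em := fun j hj => P.coeff.support.le_max' j hj
  set pneg : Polynomial ℂ :=
    ∑ j ∈ P.coeff.support, Polynomial.monomial (em - j).toNat (P.coeff j * (q:ℂ) ^ j) with hpneg_def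
  have hPe : P.coeff em ≠ 0 := Finsupp.mem_support_iff.mp hemmem
  have hpneg_ne : pneg ≠ 0 := by
    intro h0
    have hc := poly_coeff0 P.coeff.support (fun j => P.coeff j * (q:ℂ) ^ j) (fun j => em - j) em hemmem
      (show em - em = 0 by omega) (fun j hj hne' => show em - j ≠ 0 by have := hemle j hj; omega)
      (fun j hj => show (0:ℤ) ≤ em - j by have := hemle j hj; omega)
    rw [← hpneg_def, h0, Polynomial.coeff_zero] at hc
    have hz : ((q:ℂ)) ^ em ≠ 0 := zpow_ne_zero em hqc
    rcases mul_eq_zero.mp hc.symm with h | h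
    · exact hPe h
    · exact hz h
  have hpneg_root : ∀ z : ℂ, ‖z‖ = 1 → Polynomial.eval z pneg ≠ 0 := by
    intro z hz h0
    have hz0 : z ≠ 0 := by intro h; rw [h] at hz; simp at hz
    have he2 : Polynomial.eval z pneg = z ^ em * leval P ((q:ℂ) * z⁻¹) := by
      rw [hpneg_def, poly_eval, _root_.leval, Finset.mul_sum]
      apply Finset.sum_congr rfl
      intro j hj
      have hj' : (((em - j).toNat : ℤ)) = em - j := Int.toNat_of_nonneg (by have := hemle j hj; omega)
      have hz2 : (z : ℂ) ^ ((em - j).toNat) = z ^ em * z ^ (-j) := by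
        rw [← zpow_natCast, hj', sub_eq_add_neg, zpow_add₀ hz0]
      have hz3 : ((q:ℂ) * z⁻¹) ^ j = (q:ℂ) ^ j * z ^ (-j) := by
        rw [mul_zpow, inv_zpow, ← zpow_neg]
      rw [hz2, hz3]
      ring
    rw [he2] at h0
    have hzd : z ^ em ≠ 0 := zpow_ne_zero _ hz0
    have hlv : leval P ((q:ℂ) * z⁻¹) = 0 := by
      rcases mul_eq_zero.mp h0 with h | h
      · exact absurd h hzd
      · exact h
    have := (hroots _ hlv).1
    apply this
    rw [norm_mul, norm_inv, hz, Complex.norm_of_nonneg hq0.le]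
    simp
  set fneg : ℤ → ℂ := fun t => m (-t) with hfneg_def
  have hfb' : ∀ k, ‖fneg k‖ ≤ 2 := fun k => hm _
  set Cn : ℝ := B * (q ^ em * q ^ em) + 1 with hCn_def
  have hCn : 0 < Cn := by positivity
  have hbneg : ∀ k : ℤ, ‖(Polynomial.aeval Sop pneg) fneg k‖ ≤ Cn * r ^ k := by
    intro k
    have e3 : (Polynomial.aeval Sop pneg) fneg k = G (-(k + em)) := by
      rw [hpneg_def, poly_aeval_apply P.coeff.support _ (fun j => em - j)
        (fun j hj => show (0:ℤ) ≤ em - j by have := hemle j hj; omega) fneg k, hG_def]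
      simp only
      apply Finset.sum_congr rfl
      intro j hj
      rw [hfneg_def]
      simp only
      rw [show j + -(k + em) = -(k + (em - j)) from by ring]
      ring
    rw [e3]
    have h4 := hG2 (-(k + em))
    rw [neg_neg] at h4
    have h5 : q ^ (k + em) = q ^ k * q ^ em := by rw [zpow_add₀ hq0.ne']
    have h6 : B * (q ^ (k + em) * q ^ (k + em)) = B * (q ^ em * q ^ em) * r ^ k := by
      rw [h5, hrqq]; ring
    have h7 : (0:ℝ) < r ^ k := zpow_pos' hr0 k
    calc ‖G (-(k + em))‖ ≤ B * (q ^ (k + em) * q ^ (k + em)) := h4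
      _ = B * (q ^ em * q ^ em) * r ^ k := h6
      _ ≤ Cn * r ^ k := by
          apply mul_le_mul_of_nonneg_right _ h7.le
          rw [hCn_def]; linarith
  obtain ⟨C₂, r₂, hC₂, hr₂0, hr₂1, hdec₂⟩ := decay_of_op_decay pneg.natDegree pneg le_rfl
    hpneg_ne hpneg_root fneg 2 hfb' Cn r hCn hr0 hr1 hbneg
  -- combine
  set κ : ℝ := max r₁ r₂ with hκ_def
  have hκ0 : 0 < κ := lt_of_lt_of_le hr₁0 (le_max_left _ _)
  have hκ1 : κ < 1 := max_lt hr₁1 hr₂1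
  have hCl : 0 < C₁ * r₁ ^ (-l) := mul_pos hC₁ (zpow_pos' hr₁0 _)
  refine ⟨C₁ * r₁ ^ (-l) + C₂, by positivity, κ, hκ0, hκ1, ?_⟩
  intro N
  have hgoal : tr (T N) = m N := rfl
  rw [hgoal]
  have hκpow : (0:ℝ) ≤ κ ^ N.natAbs := by positivity
  rcases le_or_gt 0 N with hN | hN
  · have h8 := hdec₁ (N - l)
    have h9 : fpos (N - l) = m N := by rw [hfpos_def]; simp only; congr 1; ring
    rw [h9] at h8
    have h10 : r₁ ^ (N - l) = r₁ ^ (-l) * r₁ ^ (N.natAbs : ℤ) := by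
      rw [show N - l = -l + (N.natAbs : ℤ) from by omega, zpow_add₀ hr₁0.ne']
    have h11 : r₁ ^ ((N.natAbs : ℤ)) = r₁ ^ N.natAbs := zpow_natCast _ _
    rw [h10, h11] at h8
    calc ‖m N‖ ≤ C₁ * (r₁ ^ (-l) * r₁ ^ N.natAbs) := h8
      _ = (C₁ * r₁ ^ (-l)) * r₁ ^ N.natAbs := by ring
      _ ≤ (C₁ * r₁ ^ (-l) + C₂) * κ ^ N.natAbs := by
          apply mul_le_mul (by linarith)
            (pow_le_pow_left₀ hr₁0.le (le_max_left _ _) _) (by positivity) (by linarith)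
  · have h8 := hdec₂ (-N)
    have h9 : fneg (-N) = m N := by rw [hfneg_def]; simp only; congr 1; ring
    rw [h9] at h8
    have h10 : r₂ ^ (-N) = r₂ ^ N.natAbs := by
      rw [show -N = (N.natAbs : ℤ) from by omega, zpow_natCast]
    rw [h10] at h8
    calc ‖m N‖ ≤ C₂ * r₂ ^ N.natAbs := h8
      _ ≤ (C₁ * r₁ ^ (-l) + C₂) * κ ^ N.natAbs := by
          apply mul_le_mul (by linarith)
            (pow_le_pow_left₀ hr₂0.le (le_max_right _ _) _) (by positivity) (by linarith)
end
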